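/- If (x_n) is Fejér monotone with respect to a nonempty closed convex set C in a real Hilbert space, then the shadow sequence (P_C x_n) converges strongly (in norm) to a point of C, where P_C denotes the metric projection onto C. -/

import Mathlib

open Filter Topology

theorem fejer_shadow_converges {X : Type*} [NormedAddCommGroup X] [InnerProductSpace ℝ X]
    [CompleteSpace X]
    (C : Set X) (hCne : C.Nonempty) (hCcl : IsClosed C) (hCcv : Convex ℝ C)
    (P : X → X) (hP : ∀ z : X, P z ∈ C ∧ ∀ c ∈ C, ‖z - P z‖ ≤ ‖z - c‖)
    (x : ℕ → X) (hFej : ∀ c ∈ C, ∀ n : ℕ, ‖x (n + 1) - c‖ ≤ ‖x n - c‖) :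
    ∃ p ∈ C, Tendsto (fun n => P (x n)) atTop (𝓝 p) := by
  set p : ℕ → X := fun n => P (x n) with hp
  have hpC : ∀ n, p n ∈ C := fun n => (hP (x n)).1
  -- variational inequality for the projection
  have hvar : ∀ z : X, ∀ c ∈ C, inner ℝ (z - P z) (c - P z) ≤ (0 : ℝ) := by
    intro z c hc
    have : Nonempty C := hCne.to_subtype
    have hinf : ‖z - P z‖ = ⨅ w : C, ‖z - w‖ := by
      refine le_antisymm (le_ciInf fun w => (hP z).2 w w.2) ?_
      exact ciInf_le ⟨0, fun r ⟨w, hw⟩ => hw ▸ norm_nonneg _⟩ (⟨P z, (hP z).1⟩ : C)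
    exact ((norm_eq_iInf_iff_real_inner_le_zero hCcv (hP z).1).1 hinf) c hc
  -- Fejér monotonicity: distance to any c ∈ C is antitone
  have hanti : ∀ c ∈ C, Antitone fun n => ‖x n - c‖ := fun c hc =>
    antitone_nat_of_succ_le fun n => hFej c hc n
  -- key inequality
  have key : ∀ n m : ℕ, n ≤ m →
      ‖p m - p n‖ ^ 2 ≤ ‖x n - p n‖ ^ 2 - ‖x m - p m‖ ^ 2 := by
    intro n m hnm
    have h1 : ‖x m - p n‖ ≤ ‖x n - p n‖ := hanti (p n) (hpC n) hnm
    have h2 : inner ℝ (x m - p m) (p n - p m) ≤ (0 : ℝ) := hvar (x m) (p n) (hpC n)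
    have hexp : ‖x m - p n‖ ^ 2
        = ‖x m - p m‖ ^ 2 + 2 * inner ℝ (x m - p m) (p m - p n) + ‖p m - p n‖ ^ 2 := by
      have := @norm_add_sq_real X _ _ (x m - p m) (p m - p n)
      rw [show x m - p m + (p m - p n) = x m - p n by abel] at this
      exact this
    have h3 : (0 : ℝ) ≤ inner ℝ (x m - p m) (p m - p n) := by
      have : (inner ℝ (x m - p m) (p m - p n) : ℝ) = - inner ℝ (x m - p m) (p n - p m) := by
        rw [← inner_neg_right]; congr 1; abel
      linarith [this ▸ neg_nonneg.mpr h2]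
    have h4 : ‖x m - p n‖ ^ 2 ≤ ‖x n - p n‖ ^ 2 :=
      pow_le_pow_left₀ (norm_nonneg _) h1 2
    nlinarith
  -- d² converges, hence is Cauchy
  set d2 : ℕ → ℝ := fun n => ‖x n - p n‖ ^ 2 with hd2
  have hd2anti : Antitone d2 := by
    apply antitone_nat_of_succ_le
    intro n
    have h1 : ‖x (n + 1) - p (n + 1)‖ ≤ ‖x (n + 1) - p n‖ := (hP (x (n + 1))).2 _ (hpC n)
    have h2 : ‖x (n + 1) - p n‖ ≤ ‖x n - p n‖ := hFej (p n) (hpC n) n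
    exact pow_le_pow_left₀ (norm_nonneg _) (h1.trans h2) 2
  have hd2bdd : BddBelow (Set.range d2) := ⟨0, fun r ⟨n, hn⟩ => hn ▸ sq_nonneg _⟩
  have hd2cauchy : CauchySeq d2 := (tendsto_atTop_ciInf hd2anti hd2bdd).cauchySeq
  -- p is Cauchy
  have hpcauchy : CauchySeq p := by
    rw [Metric.cauchySeq_iff']
    intro ε hε
    obtain ⟨N, hN⟩ := (Metric.cauchySeq_iff').1 hd2cauchy (ε ^ 2) (by positivity)
    refine ⟨N, fun n hn => ?_⟩
    have h1 : ‖p n - p N‖ ^ 2 ≤ d2 N - d2 n := key N n hn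
    have h2 : |d2 n - d2 N| < ε ^ 2 := hN n hn
    have h3 : ‖p n - p N‖ ^ 2 < ε ^ 2 := by
      rw [abs_lt] at h2; linarith
    rw [dist_eq_norm]
    exact lt_of_pow_lt_pow_left₀ 2 hε.le h3
  obtain ⟨q, hq⟩ := cauchySeq_tendsto_of_complete hpcauchy
  exact ⟨q, hCcl.mem_of_tendsto hq (Eventually.of_forall hpC), hq⟩
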